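/- Fix n ≥ 1. For all real n×n matrices N and M, the following identities hold in the exterior algebra ⋀(ℝ^{2n}): v₁ ∧ v₂ = vol; τ(N) ∧ v₂ = 0; v₁ ∧ σ(M) = 0; and τ(N) ∧ σ(M) = −trace(N·M) · vol. -/
import Mathlib

noncomputable section ExteriorSetup

/-- The exterior algebra `⋀(ℝ^{2n})`. -/
abbrev EA (n : ℕ) := ExteriorAlgebra ℝ (Fin (2 * n) → ℝ)

/-- The `i`-th standard basis vector of `ℝ^{2n}`. -/
def stdv (n : ℕ) (i : Fin (2 * n)) : Fin (2 * n) → ℝ := Pi.single i 1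

/-- The image of the `i`-th standard basis vector in the exterior algebra. -/
def e (n : ℕ) (i : Fin (2 * n)) : EA n := ExteriorAlgebra.ι ℝ (stdv n i)

/-- The index `i` (for `0 ≤ i < n`) viewed in `Fin (2n)`. -/
def lo (n : ℕ) (i : Fin n) : Fin (2 * n) := ⟨i.1, by have := i.isLt; omega⟩

/-- The index `n + i` (for `0 ≤ i < n`) viewed in `Fin (2n)`. -/
def hi (n : ℕ) (i : Fin n) : Fin (2 * n) := ⟨n + i.1, by have := i.isLt; omega⟩

/-- `vol = e₁ ∧ ⋯ ∧ e_{2n}`. -/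
def vol (n : ℕ) : EA n := (List.ofFn fun i : Fin (2 * n) => e n i).prod

/-- `v₁ = e₁ ∧ ⋯ ∧ e_n`. -/
def v₁ (n : ℕ) : EA n := (List.ofFn fun i : Fin n => e n (lo n i)).prod

/-- `v₂ = e_{n+1} ∧ ⋯ ∧ e_{2n}`. -/
def v₂ (n : ℕ) : EA n := (List.ofFn fun i : Fin n => e n (hi n i)).prod

/-- `τ(N) = ∑_{i=1}^n e₁ ∧ ⋯ ∧ e_{i-1} ∧ (∑_{j=1}^n N_{ji} e_{n+j}) ∧ e_{i+1} ∧ ⋯ ∧ e_n`. -/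
def tau (n : ℕ) (N : Matrix (Fin n) (Fin n) ℝ) : EA n :=
  ∑ i : Fin n,
    (List.ofFn fun k : Fin n =>
      if k = i then ExteriorAlgebra.ι ℝ (∑ j : Fin n, N j i • stdv n (hi n j))
      else e n (lo n k)).prod

/-- `σ(M) = ∑_{i=1}^n e_{n+1} ∧ ⋯ ∧ e_{n+i-1} ∧ (∑_{j=1}^n M_{ji} e_j) ∧ e_{n+i+1} ∧ ⋯ ∧ e_{2n}`. -/
def sigmaW (n : ℕ) (M : Matrix (Fin n) (Fin n) ℝ) : EA n :=
  ∑ i : Fin n,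
    (List.ofFn fun k : Fin n =>
      if k = i then ExteriorAlgebra.ι ℝ (∑ j : Fin n, M j i • stdv n (lo n j))
      else e n (hi n k)).prod

end ExteriorSetup

noncomputable section Aux

namespace WedgeAux

variable (n : ℕ)

abbrev V (n : ℕ) := Fin (2 * n) → ℝ

/-- product of two `ofFn` products is `ιMulti` of the appended family -/
theorem mulprod (f g : Fin n → V n) :
    (List.ofFn fun i => ExteriorAlgebra.ι ℝ (f i)).prod *
      (List.ofFn fun i => ExteriorAlgebra.ι ℝ (g i)).prod =
    ExteriorAlgebra.ιMulti ℝ (n + n) (Fin.append f g) := by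
  rw [ExteriorAlgebra.ιMulti_apply, ← List.prod_append, ← List.ofFn_fin_append]
  congr 1
  apply List.ext_getElem (by simp)
  intro k h1 h2
  simp only [List.getElem_ofFn]
  refine Fin.addCases (fun k => ?_) (fun k => ?_) (⟨k, by simpa using h1⟩ : Fin (n + n))
  · simp [Fin.append_left]
  · have h : k.addNat n = Fin.natAdd n k := Fin.ext (by simp [add_comm])
    simp only [h, Fin.append_right]

/-- the lower-basis family -/
def fl : Fin n → V n := fun k => stdv n (lo n k)

/-- the upper-basis family -/
def fh : Fin n → V n := fun k => stdv n (hi n k)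

theorem append_apply (i : Fin (n + n)) :
    Fin.append (fl n) (fh n) i = stdv n ⟨i.1, by have := i.2; omega⟩ := by
  refine Fin.addCases (fun k => ?_) (fun k => ?_) i
  · rw [Fin.append_left]
    have : (⟨(Fin.castAdd n k).1, by have := (Fin.castAdd n k).2; omega⟩ : Fin (2 * n)) = lo n k :=
      Fin.ext rfl
    rw [this]; rfl
  · rw [Fin.append_right]
    have : (⟨(Fin.natAdd n k).1, by have := (Fin.natAdd n k).2; omega⟩ : Fin (2 * n)) = hi n k :=
      Fin.ext rfl
    rw [this]; rfl

theorem iMulti_eq_vol :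
    ExteriorAlgebra.ιMulti ℝ (n + n) (Fin.append (fl n) (fh n)) = vol n := by
  rw [ExteriorAlgebra.ιMulti_apply, vol]
  congr 1
  apply List.ext_getElem (by simp [two_mul])
  intro k h1 h2
  simp only [List.getElem_ofFn, append_apply]
  rfl

theorem castAdd_ne_natAdd (i j : Fin n) : (Fin.castAdd n i : Fin (n + n)) ≠ Fin.natAdd n j := by
  simp only [ne_eq, Fin.ext_iff, Fin.coe_castAdd, Fin.coe_natAdd]
  have := i.2; omega

theorem castAdd_ne_castAdd {i j : Fin n} (h : i ≠ j) :
    (Fin.castAdd n i : Fin (n + n)) ≠ Fin.castAdd n j := fun he =>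
  h (Fin.ext (by simpa [Fin.ext_iff] using he))

theorem natAdd_ne_natAdd {i j : Fin n} (h : i ≠ j) :
    (Fin.natAdd n i : Fin (n + n)) ≠ Fin.natAdd n j := fun he =>
  h (Fin.ext (by have := congrArg Fin.val he; simp only [Fin.coe_natAdd] at this; omega))

theorem append_update_left (f g : Fin n → V n) (i : Fin n) (w : V n) :
    Fin.append (Function.update f i w) g =
      Function.update (Fin.append f g) (Fin.castAdd n i) w := by
  funext k
  refine Fin.addCases (fun k => ?_) (fun k => ?_) k
  · rw [Fin.append_left]
    rcases eq_or_ne k i with rfl | hki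
    · simp
    · rw [Function.update_of_ne hki, Function.update_of_ne (castAdd_ne_castAdd n hki),
        Fin.append_left]
  · rw [Fin.append_right, Function.update_of_ne (Ne.symm (castAdd_ne_natAdd n i k)),
      Fin.append_right]

theorem append_update_right (f g : Fin n → V n) (i : Fin n) (w : V n) :
    Fin.append f (Function.update g i w) =
      Function.update (Fin.append f g) (Fin.natAdd n i) w := by
  funext k
  refine Fin.addCases (fun k => ?_) (fun k => ?_) k
  · rw [Fin.append_left, Function.update_of_ne (castAdd_ne_natAdd n k i), Fin.append_left]
  · rw [Fin.append_right]
    rcases eq_or_ne k i with rfl | hki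
    · simp
    · rw [Function.update_of_ne hki, Function.update_of_ne (natAdd_ne_natAdd n hki),
        Fin.append_right]

theorem tau_eq (N : Matrix (Fin n) (Fin n) ℝ) :
    tau n N = ∑ i : Fin n,
      (List.ofFn fun k : Fin n =>
        ExteriorAlgebra.ι ℝ
          (Function.update (fl n) i (∑ j : Fin n, N j i • fh n j) k)).prod := by
  unfold tau
  refine Finset.sum_congr rfl fun i _ => ?_
  congr 1
  apply List.ext_getElem (by simp)
  intro k h1 h2
  simp only [List.getElem_ofFn, Function.update_apply]
  split <;> rfl

theorem sigma_eq (M : Matrix (Fin n) (Fin n) ℝ) :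
    sigmaW n M = ∑ i : Fin n,
      (List.ofFn fun k : Fin n =>
        ExteriorAlgebra.ι ℝ
          (Function.update (fh n) i (∑ j : Fin n, M j i • fl n j) k)).prod := by
  unfold sigmaW
  refine Finset.sum_congr rfl fun i _ => ?_
  congr 1
  apply List.ext_getElem (by simp)
  intro k h1 h2
  simp only [List.getElem_ofFn, Function.update_apply]
  split <;> rfl

/-- value of the doubly-updated family -/
theorem Tval (i i' j j' : Fin n) :
    ExteriorAlgebra.ιMulti ℝ (n + n)
      (Function.update (Function.update (Fin.append (fl n) (fh n))
        (Fin.castAdd n i) (fh n j)) (Fin.natAdd n i') (fl n j'))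
    = if j = i' ∧ j' = i then -(vol n) else 0 := by
  set B := Fin.append (fl n) (fh n) with hB
  set m := Function.update (Function.update B (Fin.castAdd n i) (fh n j))
      (Fin.natAdd n i') (fl n j') with hm
  by_cases hj : j = i'
  · by_cases hj' : j' = i
    · subst hj; subst hj'
      rw [if_pos ⟨rfl, rfl⟩]
      have hswap : m = B ∘ Equiv.swap (Fin.castAdd n j') (Fin.natAdd n j) := by
        funext k
        rcases eq_or_ne k (Fin.castAdd n j') with rfl | h1
        · rw [hm, Function.update_of_ne (castAdd_ne_natAdd n j' j), Function.update_self]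
          simp only [Function.comp_apply, Equiv.swap_apply_left]
          rw [hB, Fin.append_right]
        · rcases eq_or_ne k (Fin.natAdd n j) with rfl | h2
          · rw [hm, Function.update_self]
            simp only [Function.comp_apply, Equiv.swap_apply_right]
            rw [hB, Fin.append_left]
          · rw [hm, Function.update_of_ne h2, Function.update_of_ne h1]
            simp only [Function.comp_apply, Equiv.swap_apply_of_ne_of_ne h1 h2]
      rw [hswap, AlternatingMap.map_swap _ _ (castAdd_ne_natAdd n j' j), iMulti_eq_vol]
    · rw [if_neg (by tauto)]
      -- fl j' appears at natAdd i' and at castAdd j'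
      have h1 : m (Fin.natAdd n i') = m (Fin.castAdd n j') := by
        rw [hm, Function.update_self, Function.update_of_ne (castAdd_ne_natAdd n j' i'),
          Function.update_of_ne (castAdd_ne_castAdd n hj'), hB, Fin.append_left]
      exact AlternatingMap.map_eq_zero_of_eq _ _ h1 (Ne.symm (castAdd_ne_natAdd n j' i'))
  · rw [if_neg (by tauto)]
    -- fh j appears at castAdd i and at natAdd j
    have h1 : m (Fin.castAdd n i) = m (Fin.natAdd n j) := by
      rw [hm, Function.update_of_ne (castAdd_ne_natAdd n i i'), Function.update_self,
        Function.update_of_ne (natAdd_ne_natAdd n hj), Function.update_of_ne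
          (Ne.symm (castAdd_ne_natAdd n i j)), hB, Fin.append_right]
    exact AlternatingMap.map_eq_zero_of_eq _ _ h1 (castAdd_ne_natAdd n i j)

end WedgeAux

end Aux

open WedgeAux in
/-- The pairing computations in Lemma 4.2 (Gromovproduct):
`v₁ ∧ v₂ = vol`, `τ(N) ∧ v₂ = 0`, `v₁ ∧ σ(M) = 0`, and
`τ(N) ∧ σ(M) = −trace(N·M)·vol`. -/
theorem wedge_pairings (n : ℕ) (hn : 1 ≤ n) (N M : Matrix (Fin n) (Fin n) ℝ) :
    v₁ n * v₂ n = vol n ∧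
    tau n N * v₂ n = 0 ∧
    v₁ n * sigmaW n M = 0 ∧
    tau n N * sigmaW n M = (-(N * M).trace) • vol n := by
  have hv1 : v₁ n = (List.ofFn fun i => ExteriorAlgebra.ι ℝ (fl n i)).prod := rfl
  have hv2 : v₂ n = (List.ofFn fun i => ExteriorAlgebra.ι ℝ (fh n i)).prod := rfl
  refine ⟨?_, ?_, ?_, ?_⟩
  · rw [hv1, hv2, mulprod]
    exact iMulti_eq_vol n
  · rw [tau_eq, hv2, Finset.sum_mul]
    refine Finset.sum_eq_zero fun i _ => ?_
    rw [mulprod, append_update_left, AlternatingMap.map_update_sum]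
    refine Finset.sum_eq_zero fun j _ => ?_
    rw [AlternatingMap.map_update_smul]
    rw [AlternatingMap.map_eq_zero_of_eq _ _
      (show Function.update (Fin.append (fl n) (fh n)) (Fin.castAdd n i) (fh n j)
            (Fin.castAdd n i)
          = Function.update (Fin.append (fl n) (fh n)) (Fin.castAdd n i) (fh n j)
            (Fin.natAdd n j) from by
        rw [Function.update_self, Function.update_of_ne (Ne.symm (castAdd_ne_natAdd n i j)),
          Fin.append_right])
      (castAdd_ne_natAdd n i j), smul_zero]
  · rw [sigma_eq, hv1, Finset.mul_sum]
    refine Finset.sum_eq_zero fun i _ => ?_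
    rw [mulprod, append_update_right, AlternatingMap.map_update_sum]
    refine Finset.sum_eq_zero fun j _ => ?_
    rw [AlternatingMap.map_update_smul]
    rw [AlternatingMap.map_eq_zero_of_eq _ _
      (show Function.update (Fin.append (fl n) (fh n)) (Fin.natAdd n i) (fl n j)
            (Fin.natAdd n i)
          = Function.update (Fin.append (fl n) (fh n)) (Fin.natAdd n i) (fl n j)
            (Fin.castAdd n j) from by
        rw [Function.update_self, Function.update_of_ne (castAdd_ne_natAdd n j i),
          Fin.append_left])
      (Ne.symm (castAdd_ne_natAdd n j i)), smul_zero]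
  · rw [tau_eq, sigma_eq, Finset.sum_mul_sum]
    have key : ∀ i i' : Fin n,
        (List.ofFn fun k => ExteriorAlgebra.ι ℝ
          (Function.update (fl n) i (∑ j : Fin n, N j i • fh n j) k)).prod *
        (List.ofFn fun k => ExteriorAlgebra.ι ℝ
          (Function.update (fh n) i' (∑ j : Fin n, M j i' • fl n j) k)).prod
        = (N i' i * M i i') • (-(vol n)) := by
      intro i i'
      rw [mulprod, append_update_left, append_update_right, AlternatingMap.map_update_sum]
      have step : ∀ j : Fin n,
          (ExteriorAlgebra.ιMulti ℝ (n + n))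
            (Function.update
              (Function.update (Fin.append (fl n) (fh n)) (Fin.natAdd n i')
                (∑ j' : Fin n, M j' i' • fl n j'))
              (Fin.castAdd n i) (N j i • fh n j))
          = if j = i' then (N i' i * M i i') • (-(vol n)) else 0 := by
        intro j
        rw [AlternatingMap.map_update_smul,
          Function.update_comm (Ne.symm (castAdd_ne_natAdd n i i')),
          AlternatingMap.map_update_sum]
        have : ∀ j' : Fin n,
            (ExteriorAlgebra.ιMulti ℝ (n + n))
              (Function.update
                (Function.update (Fin.append (fl n) (fh n)) (Fin.castAdd n i) (fh n j))
                (Fin.natAdd n i') (M j' i' • fl n j'))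
            = if j = i' ∧ j' = i then M j' i' • (-(vol n)) else 0 := by
          intro j'
          rw [AlternatingMap.map_update_smul, Tval]
          by_cases h : j = i' ∧ j' = i <;> simp [h]
        rw [Finset.sum_congr rfl fun j' _ => this j']
        by_cases hj : j = i'
        · subst hj
          simp only [true_and]
          rw [Finset.sum_ite_eq' Finset.univ i fun x => M x j • (-(vol n))]
          simp [smul_smul, mul_comm]
        · simp [hj]
      rw [Finset.sum_congr rfl fun j _ => step j,
        Finset.sum_ite_eq' Finset.univ i' fun _ => (N i' i * M i i') • (-(vol n))]
      simp
    rw [Finset.sum_congr rfl fun i _ => Finset.sum_congr rfl fun i' _ => key i i']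
    have : ∀ i : Fin n, ∑ i' : Fin n, (N i' i * M i i') • (-(vol n))
        = (∑ i' : Fin n, N i' i * M i i') • (-(vol n)) := fun i =>
      (Finset.sum_smul).symm
    rw [Finset.sum_congr rfl fun i _ => this i, ← Finset.sum_smul]
    have htr : (∑ i : Fin n, ∑ i' : Fin n, N i' i * M i i') = (N * M).trace := by
      rw [Finset.sum_comm]
      simp [Matrix.trace, Matrix.mul_apply, Matrix.diag]
    rw [htr, smul_neg, ← neg_smul]
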